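/- Let n ≥ 1, δ ∈ (0, n], κ ∈ [0, δ), and let f : ℝⁿ → [−∞, ∞] be any function. Then the Hausdorff content centred fractional maximal function M^δ_κ f is lower semicontinuous on ℝⁿ; in particular, the set {x ∈ ℝⁿ : M^δ_κ f(x) > t} is open for every t ∈ ℝ. -/

import Mathlib

open Metric Set ENNReal

/-- The δ-dimensional Hausdorff content of a set `E ⊆ ℝⁿ`: the infimum of `∑ rᵢ^δ`
over all countable covers of `E` by open balls `B(xᵢ, rᵢ)`. -/
noncomputable def hContent (n : ℕ) (δ : ℝ) (E : Set (EuclideanSpace ℝ (Fin n))) : ℝ≥0∞ :=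
  ⨅ (c : ℕ → EuclideanSpace ℝ (Fin n)) (r : ℕ → NNReal)
    (_ : E ⊆ ⋃ i, Metric.ball (c i) (r i)), ∑' i, (r i : ℝ≥0∞) ^ δ

/-- The Choquet integral `∫_Ω f dH^δ_∞ = ∫_0^∞ H^δ_∞({x ∈ Ω : f x > t}) dt`. -/
noncomputable def choquet (n : ℕ) (δ : ℝ) (Ω : Set (EuclideanSpace ℝ (Fin n)))
    (f : EuclideanSpace ℝ (Fin n) → ℝ≥0∞) : ℝ≥0∞ :=
  ∫⁻ t in Set.Ioi (0 : ℝ), hContent n δ {x | x ∈ Ω ∧ ENNReal.ofReal t < f x}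

/-- The Hausdorff content centred fractional maximal function `M^δ_κ f`. -/
noncomputable def maxF (n : ℕ) (δ κ : ℝ) (f : EuclideanSpace ℝ (Fin n) → EReal)
    (x : EuclideanSpace ℝ (Fin n)) : ℝ≥0∞ :=
  ⨆ (r : ℝ) (_ : 0 < r),
    (ENNReal.ofReal (r ^ κ) / hContent n δ (Metric.ball x r)) *
      choquet n δ (Metric.ball x r) (fun y => (f y).abs)

lemma hContent_mono {n : ℕ} {δ : ℝ} {E F : Set (EuclideanSpace ℝ (Fin n))} (h : E ⊆ F) :
    hContent n δ E ≤ hContent n δ F := by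
  refine le_iInf fun c => le_iInf fun rad => le_iInf fun hF => ?_
  exact iInf_le_of_le c (iInf_le_of_le rad (iInf_le_of_le (h.trans hF) le_rfl))

lemma choquet_mono {n : ℕ} {δ : ℝ} {Ω₁ Ω₂ : Set (EuclideanSpace ℝ (Fin n))} (h : Ω₁ ⊆ Ω₂)
    (g : EuclideanSpace ℝ (Fin n) → ℝ≥0∞) : choquet n δ Ω₁ g ≤ choquet n δ Ω₂ g :=
  MeasureTheory.lintegral_mono fun _t => hContent_mono (fun x hx => ⟨h hx.1, hx.2⟩)

lemma hContent_ball_le (n : ℕ) {δ : ℝ} (hδ0 : 0 < δ) (x : EuclideanSpace ℝ (Fin n)) (r : ℝ) :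
    hContent n δ (Metric.ball x r) ≤ ENNReal.ofReal r ^ δ := by
  set rad : ℕ → NNReal := fun i => if i = 0 then r.toNNReal else 0 with hrad
  have hcov : Metric.ball x r ⊆ ⋃ i, Metric.ball ((fun _ : ℕ => x) i) (rad i) := by
    intro y hy
    refine mem_iUnion.2 ⟨0, ?_⟩
    simp only [hrad, if_pos rfl]
    rcases le_or_gt r 0 with h | h
    · exact absurd hy (by simp [Metric.ball_eq_empty.2 h])
    · simpa [Real.coe_toNNReal r h.le] using hy
  calc hContent n δ (Metric.ball x r) ≤ ∑' i, (rad i : ℝ≥0∞) ^ δ :=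
        iInf_le_of_le _ (iInf_le_of_le rad (iInf_le_of_le hcov le_rfl))
    _ = ENNReal.ofReal r ^ δ := by
        rw [tsum_eq_single 0 (by
          intro i hi
          simp [hrad, hi, ENNReal.zero_rpow_of_pos hδ0])]
        simp [hrad, ENNReal.ofReal]

lemma le_hContent_ball (n : ℕ) (hn : 1 ≤ n) {δ : ℝ} (hδ0 : 0 < δ) (hδn : δ ≤ n)
    (x : EuclideanSpace ℝ (Fin n)) {r : ℝ} (hr : 0 < r) :
    ENNReal.ofReal r ^ δ ≤ hContent n δ (Metric.ball x r) := by
  haveI : Nonempty (Fin n) := ⟨⟨0, hn⟩⟩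
  refine le_iInf fun c => le_iInf fun rad => le_iInf fun hcov => ?_
  by_contra hcon
  push_neg at hcon
  have hradlt : ∀ i, (rad i : ℝ≥0∞) < ENNReal.ofReal r := fun i =>
    (ENNReal.rpow_lt_rpow_iff hδ0).1 ((ENNReal.le_tsum i).trans_lt hcon)
  set V := MeasureTheory.volume (Metric.ball (0 : EuclideanSpace ℝ (Fin n)) 1) with hV
  have hV0 : V ≠ 0 := (measure_ball_pos _ _ one_pos).ne'
  have hVt : V ≠ ⊤ := ne_of_lt MeasureTheory.measure_ball_lt_top
  have hballvol : ∀ (y : EuclideanSpace ℝ (Fin n)) (s : ℝ), 0 ≤ s →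
      MeasureTheory.volume (Metric.ball y s) = ENNReal.ofReal s ^ (n : ℝ) * V := by
    intro y s hs
    rw [MeasureTheory.Measure.addHaar_ball MeasureTheory.volume y hs,
      finrank_euclideanSpace_fin, ENNReal.ofReal_pow hs, ENNReal.rpow_natCast]
  have h1 : ENNReal.ofReal r ^ (n : ℝ) * V ≤ (∑' i, (rad i : ℝ≥0∞) ^ (n : ℝ)) * V := by
    rw [← hballvol x r hr.le, ← ENNReal.tsum_mul_right]
    refine (MeasureTheory.measure_mono hcov).trans
      ((MeasureTheory.measure_iUnion_le _).trans ?_)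
    refine ENNReal.tsum_le_tsum fun i => ?_
    rw [hballvol (c i) (rad i) (rad i).2]
    simp
  have h2 : ENNReal.ofReal r ^ (n : ℝ) ≤ ∑' i, (rad i : ℝ≥0∞) ^ (n : ℝ) :=
    (ENNReal.mul_le_mul_iff_left hV0 hVt).1 h1
  have hRne0 : ENNReal.ofReal r ≠ 0 := by simp [hr]
  have hRnet : ENNReal.ofReal r ≠ ⊤ := ENNReal.ofReal_ne_top
  have hpowne0 : ENNReal.ofReal r ^ ((n : ℝ) - δ) ≠ 0 := by
    simp [ENNReal.rpow_eq_zero_iff, hRne0, hRnet]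
  have hpownet : ENNReal.ofReal r ^ ((n : ℝ) - δ) ≠ ⊤ := by
    simp [ENNReal.rpow_eq_top_iff, hRne0, hRnet]
  have h3 : ∀ i, (rad i : ℝ≥0∞) ^ (n : ℝ) ≤
      (rad i : ℝ≥0∞) ^ δ * ENNReal.ofReal r ^ ((n : ℝ) - δ) := by
    intro i
    have hnd : (0:ℝ) ≤ (n : ℝ) - δ := by linarith
    have : (rad i : ℝ≥0∞) ^ (n : ℝ) = (rad i : ℝ≥0∞) ^ δ * (rad i : ℝ≥0∞) ^ ((n : ℝ) - δ) := by
      rw [← ENNReal.rpow_add_of_nonneg δ _ hδ0.le hnd]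
      ring_nf
    rw [this]
    exact mul_le_mul_right (ENNReal.rpow_le_rpow (hradlt i).le hnd) _
  have h4 : (∑' i, (rad i : ℝ≥0∞) ^ (n : ℝ)) <
      ENNReal.ofReal r ^ δ * ENNReal.ofReal r ^ ((n : ℝ) - δ) := by
    calc (∑' i, (rad i : ℝ≥0∞) ^ (n : ℝ))
        ≤ (∑' i, (rad i : ℝ≥0∞) ^ δ) * ENNReal.ofReal r ^ ((n : ℝ) - δ) := by
          rw [← ENNReal.tsum_mul_right]; exact ENNReal.tsum_le_tsum h3
      _ < ENNReal.ofReal r ^ δ * ENNReal.ofReal r ^ ((n : ℝ) - δ) :=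
          (ENNReal.mul_lt_mul_iff_left hpowne0 hpownet).2 hcon
  rw [← ENNReal.rpow_add_of_nonneg δ _ hδ0.le (by linarith), add_sub_cancel] at h4
  exact absurd h2 (not_le.2 h4)

lemma hContent_ball_eq (n : ℕ) (hn : 1 ≤ n) {δ : ℝ} (hδ0 : 0 < δ) (hδn : δ ≤ n)
    (x : EuclideanSpace ℝ (Fin n)) {r : ℝ} (hr : 0 < r) :
    hContent n δ (Metric.ball x r) = ENNReal.ofReal (r ^ δ) := by
  rw [← ENNReal.ofReal_rpow_of_pos hr]
  exact le_antisymm (hContent_ball_le n hδ0 x r) (le_hContent_ball n hn hδ0 hδn x hr)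

/-- The Hausdorff content centred fractional maximal function `M^δ_κ f` of an arbitrary
function `f : ℝⁿ → [-∞, ∞]` is lower semicontinuous; in particular its superlevel sets
are open. -/
theorem maxF_lowerSemicontinuous (n : ℕ) (hn : 1 ≤ n) (δ κ : ℝ) (hδ0 : 0 < δ) (hδn : δ ≤ n)
    (hκ0 : 0 ≤ κ) (hκδ : κ < δ) (f : EuclideanSpace ℝ (Fin n) → EReal) :
    LowerSemicontinuous (maxF n δ κ f) ∧
      ∀ t : ℝ≥0∞, IsOpen {x : EuclideanSpace ℝ (Fin n) | t < maxF n δ κ f x} := by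
  set g : EuclideanSpace ℝ (Fin n) → ℝ≥0∞ := fun y => (f y).abs with hg
  have hδn' : δ ≤ (n : ℝ) := by exact_mod_cast hδn
  have hlsc : LowerSemicontinuous (maxF n δ κ f) := by
    intro x t ht
    rw [gt_iff_lt, maxF, lt_iSup_iff] at ht
    obtain ⟨r, ht⟩ := ht
    rw [lt_iSup_iff] at ht
    obtain ⟨hr, ht⟩ := ht
    set C := choquet n δ (Metric.ball x r) g with hC
    rw [hContent_ball_eq n hn hδ0 hδn x hr] at ht
    set A := ENNReal.ofReal (r ^ κ) with hA
    have hAne0 : A ≠ 0 := by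
      simp [hA, Real.rpow_pos_of_pos hr]
    have hAnet : A ≠ ⊤ := ENNReal.ofReal_ne_top
    have hBne0 : ∀ s : ℝ, 0 < s → ENNReal.ofReal (s ^ δ) ≠ 0 := fun s hs => by
      simp [Real.rpow_pos_of_pos hs]
    -- the function ε ↦ A / ofReal ((r+ε)^δ) * C tends to A / ofReal (r^δ) * C as ε → 0⁺
    have htend : Filter.Tendsto (fun ε : ℝ => A / ENNReal.ofReal ((r + ε) ^ δ) * C)
        (nhdsWithin 0 (Set.Ioi 0)) (nhds (A / ENNReal.ofReal (r ^ δ) * C)) := by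
      have h0 : Filter.Tendsto (fun ε : ℝ => ENNReal.ofReal ((r + ε) ^ δ))
          (nhdsWithin 0 (Set.Ioi 0)) (nhds (ENNReal.ofReal (r ^ δ))) := by
        have h3 : Filter.Tendsto (fun ε : ℝ => (r + ε) ^ δ) (nhds 0) (nhds (r ^ δ)) := by
          have h2 : ContinuousAt (fun ε : ℝ => r + ε) 0 := by fun_prop
          have h1 : ContinuousAt (fun y : ℝ => y ^ δ) (r + 0) := by
            simpa using Real.continuousAt_rpow_const r δ (Or.inl hr.ne')
          simpa [Function.comp_def] using (h1.comp h2).tendsto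
        exact ((ENNReal.continuous_ofReal.tendsto _).comp h3).mono_left nhdsWithin_le_nhds
      have hdiv : Filter.Tendsto (fun ε : ℝ => A / ENNReal.ofReal ((r + ε) ^ δ))
          (nhdsWithin 0 (Set.Ioi 0)) (nhds (A / ENNReal.ofReal (r ^ δ))) :=
        ENNReal.Tendsto.const_div h0 (Or.inl ENNReal.ofReal_ne_top)
      refine ENNReal.Tendsto.mul_const hdiv (Or.inl ?_)
      exact (ENNReal.div_pos hAne0 ENNReal.ofReal_ne_top).ne'
    have hev : ∀ᶠ ε in nhdsWithin (0:ℝ) (Set.Ioi 0),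
        t < A / ENNReal.ofReal ((r + ε) ^ δ) * C := htend.eventually (eventually_gt_nhds ht)
    obtain ⟨ε, hε, hεt⟩ := (hev.and self_mem_nhdsWithin).exists
    filter_upwards [Metric.ball_mem_nhds x hεt] with x' hx'
    have hsub : Metric.ball x r ⊆ Metric.ball x' (r + ε) := by
      intro y hy
      rw [Metric.mem_ball] at hy ⊢
      calc dist y x' ≤ dist y x + dist x x' := dist_triangle _ _ _
        _ < r + ε := by
            have := Metric.mem_ball.1 hx'
            rw [dist_comm x x']
            linarith
    have hrε : 0 < r + ε := by linarith
    rw [gt_iff_lt, maxF, lt_iSup_iff]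
    refine ⟨r + ε, ?_⟩
    rw [lt_iSup_iff]
    refine ⟨hrε, lt_of_lt_of_le hε ?_⟩
    rw [hContent_ball_eq n hn hδ0 hδn x' hrε]
    refine mul_le_mul' (ENNReal.div_le_div ?_ le_rfl) (choquet_mono hsub g)
    exact ENNReal.ofReal_le_ofReal (Real.rpow_le_rpow hr.le (by linarith) hκ0)
  exact ⟨hlsc, fun t => lowerSemicontinuous_iff_isOpen_preimage.1 hlsc t⟩
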